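/- (The relative angular momentum is a particular integral of the two-body Coulomb system in a constant magnetic field.) Fix real constants M > 0, μ > 0, e, e_eff, B. On the phase space ℝ⁴ × ℝ⁴ with position coordinates (R₁, R₂, r₁, r₂) and conjugate momenta (K₁, K₂, p₁, p₂), restricted to r₁² + r₂² > 0, define the Hamiltonian 𝓗 = (K₁² + K₂²)/(2M) + (eB/M)·(K₁ r₂ − K₂ r₁) + (1/(2μ))·[(p₁ + (e_eff B/2)·r₂)² + (p₂ − (e_eff B/2)·r₁)²] + e²B²(r₁² + r₂²)/(2M) − e²/√(r₁² + r₂²), and let ℓ_z = r₁ p₂ − r₂ p₁. Then the canonical Poisson bracket {ℓ_z, 𝓗} vanishes at every point of the phase space where K₁ = 0 and K₂ = 0. -/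

import Mathlib

open scoped BigOperators

/-- The `i`-th coordinate direction in the `q` (position) factor of phase space `ℝⁿ × ℝⁿ`. -/
noncomputable def eQ (n : ℕ) (i : Fin n) : (Fin n → ℝ) × (Fin n → ℝ) :=
  (Pi.single i 1, 0)

/-- The `i`-th coordinate direction in the `p` (momentum) factor of phase space `ℝⁿ × ℝⁿ`. -/
noncomputable def eP (n : ℕ) (i : Fin n) : (Fin n → ℝ) × (Fin n → ℝ) :=
  (0, Pi.single i 1)

/-- The canonical Poisson bracket `{f,g} = Σᵢ (∂f/∂qⁱ ∂g/∂pᵢ − ∂f/∂pᵢ ∂g/∂qⁱ)` on `ℝⁿ × ℝⁿ`. -/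
noncomputable def poissonBracket {n : ℕ} (f g : (Fin n → ℝ) × (Fin n → ℝ) → ℝ)
    (x : (Fin n → ℝ) × (Fin n → ℝ)) : ℝ :=
  ∑ i : Fin n, (fderiv ℝ f x (eQ n i) * fderiv ℝ g x (eP n i)
    - fderiv ℝ f x (eP n i) * fderiv ℝ g x (eQ n i))

/-- The Hamiltonian vector field `X_f = (∂f/∂p₁,…,∂f/∂pₙ, −∂f/∂q¹,…,−∂f/∂qⁿ)` on `ℝⁿ × ℝⁿ`. -/
noncomputable def hamVF {n : ℕ} (f : (Fin n → ℝ) × (Fin n → ℝ) → ℝ)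
    (x : (Fin n → ℝ) × (Fin n → ℝ)) : (Fin n → ℝ) × (Fin n → ℝ) :=
  (fun i => fderiv ℝ f x (eP n i), fun i => - fderiv ℝ f x (eQ n i))

/-- The planar two-body Coulomb system in a constant perpendicular magnetic field, in
center-of-mass variables. Positions: `x.1 0 = R₁`, `x.1 1 = R₂`, `x.1 2 = r₁`, `x.1 3 = r₂`;
conjugate momenta: `x.2 0 = K₁`, `x.2 1 = K₂`, `x.2 2 = p₁`, `x.2 3 = p₂`. -/
noncomputable def twoBodyCoulombB (M μ e eeff B : ℝ) (x : (Fin 4 → ℝ) × (Fin 4 → ℝ)) : ℝ :=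
  ((x.2 0) ^ 2 + (x.2 1) ^ 2) / (2 * M)
    + (e * B / M) * (x.2 0 * x.1 3 - x.2 1 * x.1 2)
    + (1 / (2 * μ)) * ((x.2 2 + (eeff * B / 2) * x.1 3) ^ 2
        + (x.2 3 - (eeff * B / 2) * x.1 2) ^ 2)
    + e ^ 2 * B ^ 2 * ((x.1 2) ^ 2 + (x.1 3) ^ 2) / (2 * M)
    - e ^ 2 / Real.sqrt ((x.1 2) ^ 2 + (x.1 3) ^ 2)

/-- The `z`-component of the relative angular momentum, `ℓ_z = r₁ p₂ − r₂ p₁`. -/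
noncomputable def relAngMom (x : (Fin 4 → ℝ) × (Fin 4 → ℝ)) : ℝ :=
  x.1 2 * x.2 3 - x.1 3 * x.2 2

abbrev Ph := (Fin 4 → ℝ) × (Fin 4 → ℝ)

/-- Coordinate functional `x ↦ x.1 i` as a continuous linear map. -/
noncomputable def cQ (i : Fin 4) : Ph →L[ℝ] ℝ :=
  (ContinuousLinearMap.proj i).comp (ContinuousLinearMap.fst ℝ (Fin 4 → ℝ) (Fin 4 → ℝ))

/-- Coordinate functional `x ↦ x.2 i` as a continuous linear map. -/
noncomputable def cP (i : Fin 4) : Ph →L[ℝ] ℝ :=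
  (ContinuousLinearMap.proj i).comp (ContinuousLinearMap.snd ℝ (Fin 4 → ℝ) (Fin 4 → ℝ))

set_option maxHeartbeats 2000000 in
/-- (The relative angular momentum is a particular integral of the two-body
Coulomb system in a constant magnetic field.) The canonical Poisson bracket `{ℓ_z, 𝓗}`
vanishes at every point of phase space with `r₁² + r₂² > 0` where the pseudomomentum
vanishes: `K₁ = K₂ = 0`. -/
theorem relAngMom_particular_integral
    (M μ e eeff B : ℝ) (hM : 0 < M) (hμ : 0 < μ) :
    ∀ x : (Fin 4 → ℝ) × (Fin 4 → ℝ),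
      0 < (x.1 2) ^ 2 + (x.1 3) ^ 2 → x.2 0 = 0 → x.2 1 = 0 →
      poissonBracket relAngMom (twoBodyCoulombB M μ e eeff B) x = 0 := by
  intro x hpos h0 h1
  have hsne : ((x.1 2) ^ 2 + (x.1 3) ^ 2) ≠ 0 := ne_of_gt hpos
  have hsqpos : 0 < Real.sqrt ((x.1 2) ^ 2 + (x.1 3) ^ 2) := Real.sqrt_pos.mpr hpos
  have hsqne : Real.sqrt ((x.1 2) ^ 2 + (x.1 3) ^ 2) ≠ 0 := ne_of_gt hsqpos
  -- coordinate derivatives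
  have hQ : ∀ i : Fin 4, HasFDerivAt (fun y : Ph => y.1 i) (cQ i) x := fun i => (cQ i).hasFDerivAt
  have hP : ∀ i : Fin 4, HasFDerivAt (fun y : Ph => y.2 i) (cP i) x := fun i => (cP i).hasFDerivAt
  -- squaring rule
  have hpow : ∀ {f : Ph → ℝ} {f' : Ph →L[ℝ] ℝ}, HasFDerivAt f f' x →
      HasFDerivAt (fun y => f y ^ 2) (((2 : ℝ) * f x) • f') x := by
    intro f f' hf
    simpa [Function.comp_def] using (hasDerivAt_pow 2 (f x)).comp_hasFDerivAt x hf
  -- the squared radius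
  have hS : HasFDerivAt (fun y : Ph => (y.1 2) ^ 2 + (y.1 3) ^ 2)
      (((2 : ℝ) * (x.1 2)) • cQ 2 + ((2 : ℝ) * (x.1 3)) • cQ 3) x :=
    (hpow (hQ 2)).add (hpow (hQ 3))
  -- Coulomb term
  have hcoul1 : HasDerivAt (fun t : ℝ => e ^ 2 / Real.sqrt t)
      ((0 * Real.sqrt ((x.1 2) ^ 2 + (x.1 3) ^ 2)
        - e ^ 2 * (1 / (2 * Real.sqrt ((x.1 2) ^ 2 + (x.1 3) ^ 2))))
        / Real.sqrt ((x.1 2) ^ 2 + (x.1 3) ^ 2) ^ 2) ((x.1 2) ^ 2 + (x.1 3) ^ 2) :=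
    (hasDerivAt_const _ _).div (Real.hasDerivAt_sqrt hsne) hsqne
  have hcoul := hcoul1.comp_hasFDerivAt x hS
  -- full Hamiltonian derivative
  have hH := ((((((hpow (hP 0)).add (hpow (hP 1))).mul_const ((2 * M)⁻¹)).add
      ((((hP 0).mul (hQ 3)).sub ((hP 1).mul (hQ 2))).const_mul (e * B / M))).add
      (((hpow ((hP 2).add ((hQ 3).const_mul (eeff * B / 2)))).add
        (hpow ((hP 3).sub ((hQ 2).const_mul (eeff * B / 2))))).const_mul (1 / (2 * μ)))).add
      ((hS.const_mul (e ^ 2 * B ^ 2)).mul_const ((2 * M)⁻¹))).sub hcoul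
  have hH' : HasFDerivAt (twoBodyCoulombB M μ e eeff B) _ x := hH
  -- angular momentum derivative
  have hL : HasFDerivAt relAngMom _ x := ((hQ 2).mul (hP 3)).sub ((hQ 3).mul (hP 2))
  unfold poissonBracket
  rw [hH'.fderiv, hL.fderiv, Fin.sum_univ_four]
  simp only [eQ, eP, cQ, cP, ContinuousLinearMap.add_apply, ContinuousLinearMap.sub_apply,
    ContinuousLinearMap.smul_apply, ContinuousLinearMap.comp_apply,
    ContinuousLinearMap.coe_fst', ContinuousLinearMap.coe_snd', ContinuousLinearMap.proj_apply,
    smul_eq_mul, Pi.single_apply, Pi.zero_apply, h0, h1]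
  norm_num [Fin.isValue, show ((2:Fin 4) ≠ 3) from by decide, show ((3:Fin 4) ≠ 2) from by decide, show ((3:Fin 4) ≠ 0) from by decide, show ((3:Fin 4) ≠ 1) from by decide, show ((2:Fin 4) ≠ 0) from by decide, show ((2:Fin 4) ≠ 1) from by decide, show ((0:Fin 4) ≠ 1) from by decide, show ((1:Fin 4) ≠ 0) from by decide, show ((0:Fin 4) ≠ 2) from by decide, show ((0:Fin 4) ≠ 3) from by decide, show ((1:Fin 4) ≠ 2) from by decide, show ((1:Fin 4) ≠ 3) from by decide]
  field_simp
  ring
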